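/- Let ξ0 ∈ ℝ with 0 < r_min < |ξ0| < r_max, and let Λ(t) = e^{2t}(ξ0² + (1 − ξ0²)e^{−2t})^{3/2}. Then for every integer i ≥ 1 there exists a constant C(i) > 0 such that for all t ≥ 0: Λ(t)^{−i} ∫₀ᵗ Λ(s)^i e^{−s} ds ≤ C(i) e^{−t}. -/

import Mathlib

/-- exponentially weighted kernel estimate for the integrating factor. -/
theorem stmt6 (ξ0 r_min r_max : ℝ) (h0 : 0 < r_min) (h1 : r_min < |ξ0|)
    (h2 : |ξ0| < r_max)
    (Λ : ℝ → ℝ)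
    (hΛ : ∀ t : ℝ, Λ t =
      Real.exp (2 * t) * (ξ0 ^ 2 + (1 - ξ0 ^ 2) * Real.exp (-2 * t)) ^ ((3:ℝ)/2)) :
    ∀ i : ℕ, 1 ≤ i → ∃ C : ℝ, 0 < C ∧ ∀ t : ℝ, 0 ≤ t →
      (Λ t ^ i)⁻¹ * (∫ s in (0:ℝ)..t, Λ s ^ i * Real.exp (-s)) ≤ C * Real.exp (-t) := by
  intro i hi
  have hξ0 : ξ0 ≠ 0 := by
    intro h
    rw [h] at h1
    simp at h1
    linarith
  have hξ2 : 0 < ξ0 ^ 2 := by positivity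
  set a : ℝ := min (ξ0 ^ 2) 1 with ha
  set b : ℝ := max (ξ0 ^ 2) 1 with hb
  have ha0 : 0 < a := lt_min hξ2 one_pos
  have hb0 : 0 < b := lt_of_lt_of_le ha0 min_le_max
  -- bounds on g s := ξ0^2 + (1-ξ0^2) * exp (-2 s) for s ≥ 0
  have hgl : ∀ s : ℝ, 0 ≤ s → a ≤ ξ0 ^ 2 + (1 - ξ0 ^ 2) * Real.exp (-2 * s) := by
    intro s hs
    have hu1 : Real.exp (-2 * s) ≤ 1 := Real.exp_le_one_iff.mpr (by linarith)
    have hu0 : 0 ≤ Real.exp (-2 * s) := (Real.exp_pos _).le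
    have h1' : a ≤ ξ0 ^ 2 := min_le_left _ _
    have h2' : a ≤ 1 := min_le_right _ _
    nlinarith [mul_nonneg (sub_nonneg.mpr hu1) (sub_nonneg.mpr h1'),
      mul_nonneg hu0 (sub_nonneg.mpr h2')]
  have hgu : ∀ s : ℝ, 0 ≤ s → ξ0 ^ 2 + (1 - ξ0 ^ 2) * Real.exp (-2 * s) ≤ b := by
    intro s hs
    have hu1 : Real.exp (-2 * s) ≤ 1 := Real.exp_le_one_iff.mpr (by linarith)
    have hu0 : 0 ≤ Real.exp (-2 * s) := (Real.exp_pos _).le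
    have h1' : ξ0 ^ 2 ≤ b := le_max_left _ _
    have h2' : (1:ℝ) ≤ b := le_max_right _ _
    nlinarith [mul_nonneg (sub_nonneg.mpr hu1) (sub_nonneg.mpr h1'),
      mul_nonneg hu0 (sub_nonneg.mpr h2')]
  set m : ℝ := a ^ ((3:ℝ)/2) with hm
  set M : ℝ := b ^ ((3:ℝ)/2) with hM
  have hm0 : 0 < m := Real.rpow_pos_of_pos ha0 _
  have hM0 : 0 < M := Real.rpow_pos_of_pos hb0 _
  -- bounds on Λ
  have hΛlb : ∀ s : ℝ, 0 ≤ s → m * Real.exp (2 * s) ≤ Λ s := by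
    intro s hs
    rw [hΛ s]
    have h3 : m ≤ (ξ0 ^ 2 + (1 - ξ0 ^ 2) * Real.exp (-2 * s)) ^ ((3:ℝ)/2) :=
      Real.rpow_le_rpow ha0.le (hgl s hs) (by norm_num)
    nlinarith [Real.exp_pos (2 * s), h3]
  have hΛub : ∀ s : ℝ, 0 ≤ s → Λ s ≤ M * Real.exp (2 * s) := by
    intro s hs
    rw [hΛ s]
    have h3 : (ξ0 ^ 2 + (1 - ξ0 ^ 2) * Real.exp (-2 * s)) ^ ((3:ℝ)/2) ≤ M := by
      apply Real.rpow_le_rpow _ (hgu s hs) (by norm_num)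
      linarith [hgl s hs, ha0]
    nlinarith [Real.exp_pos (2 * s), h3]
  have hΛpos : ∀ s : ℝ, 0 ≤ s → 0 < Λ s := fun s hs =>
    lt_of_lt_of_le (by positivity) (hΛlb s hs)
  set c : ℝ := 2 * (i : ℝ) - 1 with hc
  have hc1 : (1:ℝ) ≤ c := by
    have : (1:ℝ) ≤ (i : ℝ) := by exact_mod_cast hi
    simp only [hc]; linarith
  have hc0 : c ≠ 0 := by linarith
  refine ⟨(M / m) ^ i, by positivity, ?_⟩
  intro t ht
  -- integrand bounds
  have hbound : ∀ s : ℝ, 0 ≤ s → Λ s ^ i * Real.exp (-s) ≤ M ^ i * Real.exp (c * s) := by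
    intro s hs
    have h1 : Λ s ^ i ≤ (M * Real.exp (2 * s)) ^ i :=
      pow_le_pow_left₀ (hΛpos s hs).le (hΛub s hs) i
    have h2 : Λ s ^ i * Real.exp (-s) ≤ (M * Real.exp (2 * s)) ^ i * Real.exp (-s) :=
      mul_le_mul_of_nonneg_right h1 (Real.exp_pos _).le
    refine h2.trans_eq ?_
    rw [mul_pow, ← Real.exp_nat_mul, mul_assoc, ← Real.exp_add]
    congr 1
    simp only [hc]; ring
  -- integrability
  have hcontg : Continuous (fun s : ℝ => ξ0 ^ 2 + (1 - ξ0 ^ 2) * Real.exp (-2 * s)) :=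
    continuous_const.add (continuous_const.mul
      (Real.continuous_exp.comp (continuous_const.mul continuous_id)))
  have hcontΛ : ContinuousOn Λ (Set.Icc 0 t) := by
    apply continuousOn_of_forall_continuousAt
    intro x hx
    have hgx : (0:ℝ) < ξ0 ^ 2 + (1 - ξ0 ^ 2) * Real.exp (-2 * x) :=
      lt_of_lt_of_le ha0 (hgl x hx.1)
    have hca : ContinuousAt (fun s : ℝ =>
        Real.exp (2 * s) * (ξ0 ^ 2 + (1 - ξ0 ^ 2) * Real.exp (-2 * s)) ^ ((3:ℝ)/2)) x := by
      apply ContinuousAt.mul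
      · exact (Real.continuous_exp.comp (continuous_const.mul continuous_id)).continuousAt
      · exact hcontg.continuousAt.rpow_const (Or.inl hgx.ne')
    exact hca.congr (Filter.Eventually.of_forall (fun y => (hΛ y).symm))
  have hint1 : IntervalIntegrable (fun s => Λ s ^ i * Real.exp (-s)) MeasureTheory.volume 0 t := by
    apply ContinuousOn.intervalIntegrable
    rw [Set.uIcc_of_le ht]
    exact ((hcontΛ.pow i).mul (Real.continuous_exp.comp continuous_neg).continuousOn)
  have hcexp : Continuous (fun s : ℝ => Real.exp (c * s)) :=
    Real.continuous_exp.comp (continuous_const.mul continuous_id)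
  have hint2 : IntervalIntegrable (fun s => M ^ i * Real.exp (c * s)) MeasureTheory.volume 0 t :=
    ((continuous_const.mul hcexp).intervalIntegrable 0 t)
  -- integral of exp(c s)
  have hIexp : (∫ s in (0:ℝ)..t, Real.exp (c * s)) = (Real.exp (c * t) - 1) / c := by
    have hderiv : ∀ s ∈ Set.uIcc (0:ℝ) t,
        HasDerivAt (fun x => Real.exp (c * x) / c) (Real.exp (c * s)) s := by
      intro s _
      have h1 : HasDerivAt (fun x : ℝ => c * x) c s := by
        simpa using (hasDerivAt_id s).const_mul c
      have h2 := (Real.hasDerivAt_exp (c * s)).comp s h1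
      have h3 := h2.div_const c
      simpa [mul_div_assoc, mul_div_cancel_right₀ _ hc0] using h3
    rw [intervalIntegral.integral_eq_sub_of_hasDerivAt hderiv
      (hcexp.intervalIntegrable 0 t)]
    rw [mul_zero, Real.exp_zero]
    ring
  -- bound the integral
  have hI : (∫ s in (0:ℝ)..t, Λ s ^ i * Real.exp (-s)) ≤ M ^ i * Real.exp (c * t) := by
    have step1 : (∫ s in (0:ℝ)..t, Λ s ^ i * Real.exp (-s)) ≤
        ∫ s in (0:ℝ)..t, M ^ i * Real.exp (c * s) := by
      apply intervalIntegral.integral_mono_on ht hint1 hint2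
      intro s hs
      exact hbound s hs.1
    have step2 : (∫ s in (0:ℝ)..t, M ^ i * Real.exp (c * s)) =
        M ^ i * ((Real.exp (c * t) - 1) / c) := by
      rw [intervalIntegral.integral_const_mul, hIexp]
    have step3 : (Real.exp (c * t) - 1) / c ≤ Real.exp (c * t) := by
      have hnum : 0 ≤ Real.exp (c * t) - 1 := by
        have : (1:ℝ) ≤ Real.exp (c * t) := Real.one_le_exp (by nlinarith)
        linarith
      calc (Real.exp (c * t) - 1) / c ≤ Real.exp (c * t) - 1 := div_le_self hnum hc1
        _ ≤ Real.exp (c * t) := by linarith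
    calc (∫ s in (0:ℝ)..t, Λ s ^ i * Real.exp (-s)) ≤
        M ^ i * ((Real.exp (c * t) - 1) / c) := step1.trans_eq step2
      _ ≤ M ^ i * Real.exp (c * t) := by
          apply mul_le_mul_of_nonneg_left step3 (by positivity)
  -- nonnegativity of the integral
  have hI0 : 0 ≤ ∫ s in (0:ℝ)..t, Λ s ^ i * Real.exp (-s) := by
    apply intervalIntegral.integral_nonneg ht
    intro s hs
    have := hΛpos s hs.1
    positivity
  -- lower bound on Λ t ^ i
  have hΛt : m ^ i * Real.exp ((i : ℝ) * (2 * t)) ≤ Λ t ^ i := by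
    have h1 : (m * Real.exp (2 * t)) ^ i ≤ Λ t ^ i :=
      pow_le_pow_left₀ (by positivity) (hΛlb t ht) i
    refine le_trans (le_of_eq ?_) h1
    rw [mul_pow, ← Real.exp_nat_mul]
  have hΛti : (Λ t ^ i)⁻¹ ≤ (m ^ i * Real.exp ((i : ℝ) * (2 * t)))⁻¹ := by
    apply inv_anti₀ (by positivity) hΛt
  -- combine
  have hmain : (Λ t ^ i)⁻¹ * (∫ s in (0:ℝ)..t, Λ s ^ i * Real.exp (-s)) ≤
      (m ^ i * Real.exp ((i : ℝ) * (2 * t)))⁻¹ * (M ^ i * Real.exp (c * t)) :=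
    mul_le_mul hΛti hI hI0 (by positivity)
  refine hmain.trans (le_of_eq ?_)
  have hexp : Real.exp (c * t) / Real.exp ((i : ℝ) * (2 * t)) = Real.exp (-t) := by
    rw [← Real.exp_sub]
    congr 1
    simp only [hc]; ring
  rw [div_pow]
  field_simp
  rw [← hexp]
  field_simp
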